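/- Let d ≥ K ≥ 2, n ≥ 1, N = Kn, τ > 0, and let (W,H) ∈ OB(d,K) × OB(d,N) be a Riemannian critical point of f. Then (W,H) is a global minimizer of f over OB(d,K) × OB(d,N) if and only if α_k ≤ −√n·‖G‖ for every k ∈ {1,…,K} and β_j ≤ −‖G‖/√n for every j ∈ {1,…,N}, where ‖G‖ denotes the spectral norm of G. -/

import Mathlib

open scoped BigOperators Matrix

/-- The oblique manifold: matrices all of whose columns have unit Euclidean norm. -/
def OB (p : ℕ) (ι : Type) [Fintype ι] : Set (Matrix (Fin p) ι ℝ) :=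
  {M | ∀ j, ∑ i, (M i j) ^ 2 = 1}

/-- The softmax map `η(z)_j = exp(z_j) / ∑_ℓ exp(z_ℓ)`. -/
noncomputable def softmax {K : ℕ} (z : Fin K → ℝ) (j : Fin K) : ℝ :=
  Real.exp (z j) / ∑ ℓ, Real.exp (z ℓ)

/-- The logits `τ Wᵀ h_j` for the column `j = (k,i)` of `H`. -/
noncomputable def logits {d K n : ℕ} (τ : ℝ) (W : Matrix (Fin d) (Fin K) ℝ)
    (H : Matrix (Fin d) (Fin K × Fin n) ℝ) (j : Fin K × Fin n) : Fin K → ℝ :=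
  fun ℓ => τ * ∑ r, W r ℓ * H r j

/-- The gradient matrix `G`: its column indexed by `(k,i)` is `(1/N)(η(τ Wᵀ h_{k,i}) − e_k)`. -/
noncomputable def Gmat {d K n : ℕ} (τ : ℝ) (W : Matrix (Fin d) (Fin K) ℝ)
    (H : Matrix (Fin d) (Fin K × Fin n) ℝ) : Matrix (Fin K) (Fin K × Fin n) ℝ :=
  fun ℓ j => (1 / ((K : ℝ) * n)) * (softmax (logits τ W H j) ℓ - if ℓ = j.1 then 1 else 0)

/-- `ddiag A` is the diagonal matrix with the same diagonal as `A`. -/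
def ddiag {ι : Type} [Fintype ι] [DecidableEq ι] (A : Matrix ι ι ℝ) : Matrix ι ι ℝ :=
  Matrix.diagonal fun i => A i i

/-- `(W,H)` is a Riemannian critical point of `f` if
`H Gᵀ = W ddiag(Wᵀ H Gᵀ)` and `W G = H ddiag(Hᵀ W G)`. -/
noncomputable def IsCriticalPoint {d K n : ℕ} (τ : ℝ) (W : Matrix (Fin d) (Fin K) ℝ)
    (H : Matrix (Fin d) (Fin K × Fin n) ℝ) : Prop :=
  H * (Gmat τ W H)ᵀ = W * ddiag (Wᵀ * (H * (Gmat τ W H)ᵀ)) ∧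
  W * Gmat τ W H = H * ddiag (Hᵀ * (W * Gmat τ W H))

/-- `α_k = ⟨w_k, H gᵏ⟩` where `gᵏ` is the `k`-th row of `G`. -/
noncomputable def alphaCoef {d K n : ℕ} (τ : ℝ) (W : Matrix (Fin d) (Fin K) ℝ)
    (H : Matrix (Fin d) (Fin K × Fin n) ℝ) (k : Fin K) : ℝ :=
  ∑ r, W r k * ∑ j, H r j * Gmat τ W H k j

/-- `β_j = ⟨h_j, W g_j⟩` where `g_j` is the `j`-th column of `G`. -/
noncomputable def betaCoef {d K n : ℕ} (τ : ℝ) (W : Matrix (Fin d) (Fin K) ℝ)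
    (H : Matrix (Fin d) (Fin K × Fin n) ℝ) (j : Fin K × Fin n) : ℝ :=
  ∑ r, H r j * ∑ ℓ, W r ℓ * Gmat τ W H ℓ j

/-- The cross-entropy loss `L_CE(z,k) = log (∑_ℓ exp (z_ℓ)) − z_k`. -/
noncomputable def LCE {K : ℕ} (z : Fin K → ℝ) (k : Fin K) : ℝ :=
  Real.log (∑ ℓ, Real.exp (z ℓ)) - z k

/-- The cross-entropy risk `f(W,H) = (1/N) ∑_k ∑_i L_CE(τ Wᵀ h_{k,i}, k)` with `N = K n`. -/
noncomputable def ceRisk {d K n : ℕ} (τ : ℝ) (W : Matrix (Fin d) (Fin K) ℝ)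
    (H : Matrix (Fin d) (Fin K × Fin n) ℝ) : ℝ :=
  (1 / ((K : ℝ) * n)) * ∑ k : Fin K, ∑ i : Fin n,
    LCE (fun ℓ => τ * ∑ r, W r ℓ * H r (k, i)) k

/-- Spectral norm (i.e. the `ℓ²→ℓ²` operator norm) of a matrix. -/
noncomputable def specNorm {K n : ℕ} (G : Matrix (Fin K) (Fin K × Fin n) ℝ) : ℝ :=
  ‖LinearMap.toContinuousLinearMap (Matrix.toEuclideanLin G)‖

lemma sum_exp_pos {K : ℕ} (hK : 0 < K) (z : Fin K → ℝ) : 0 < ∑ ℓ, Real.exp (z ℓ) :=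
  Finset.sum_pos (fun ℓ _ => Real.exp_pos _) (by simp [Finset.univ_nonempty_iff, Fin.pos_iff_nonempty.mp hK])

lemma exp_sum_rw {K : ℕ} (z z' : Fin K → ℝ) (m : ℝ) :
    ∑ ℓ, Real.exp (z ℓ) * (Real.exp m * (1 + (z' ℓ - z ℓ - m)))
      = Real.exp m * ((1 - m) * ∑ ℓ, Real.exp (z ℓ) + ∑ ℓ, Real.exp (z ℓ) * (z' ℓ - z ℓ)) := by
  simp only [Finset.mul_sum, ← Finset.sum_add_distrib]
  exact Finset.sum_congr rfl (fun ℓ _ => by ring)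

lemma sum_exp_delta {K : ℕ} (z z' : Fin K → ℝ) :
    ∑ ℓ, Real.exp (z ℓ) * (z' ℓ - z ℓ)
      = (∑ ℓ, Real.exp (z ℓ)) * ∑ ℓ, softmax z ℓ * (z' ℓ - z ℓ) := by
  rw [Finset.mul_sum]
  refine Finset.sum_congr rfl (fun ℓ _ => ?_)
  have hS : (∑ ℓ, Real.exp (z ℓ)) ≠ 0 := by
    have : (0:ℝ) < ∑ ℓ', Real.exp (z ℓ') :=
      Finset.sum_pos' (fun _ _ => (Real.exp_pos _).le) ⟨ℓ, Finset.mem_univ _, Real.exp_pos _⟩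
    exact ne_of_gt this
  unfold softmax
  field_simp

lemma sum_exp_ge {K : ℕ} (hK : 0 < K) (z z' : Fin K → ℝ) :
    (∑ ℓ, Real.exp (z ℓ)) * Real.exp (∑ ℓ, softmax z ℓ * (z' ℓ - z ℓ)) ≤ ∑ ℓ, Real.exp (z' ℓ) := by
  set S := ∑ ℓ, Real.exp (z ℓ) with hS
  set m := ∑ ℓ, softmax z ℓ * (z' ℓ - z ℓ) with hm
  have key : ∀ ℓ : Fin K, Real.exp (z ℓ) * (Real.exp m * (1 + (z' ℓ - z ℓ - m))) ≤ Real.exp (z' ℓ) := by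
    intro ℓ
    have h1 : (z' ℓ - z ℓ - m) + 1 ≤ Real.exp (z' ℓ - z ℓ - m) := Real.add_one_le_exp _
    have h2 : Real.exp (z ℓ) * Real.exp m * ((z' ℓ - z ℓ - m) + 1)
        ≤ Real.exp (z ℓ) * Real.exp m * Real.exp (z' ℓ - z ℓ - m) :=
      mul_le_mul_of_nonneg_left h1 (by positivity)
    calc Real.exp (z ℓ) * (Real.exp m * (1 + (z' ℓ - z ℓ - m)))
        = Real.exp (z ℓ) * Real.exp m * ((z' ℓ - z ℓ - m) + 1) := by ring
      _ ≤ Real.exp (z ℓ) * Real.exp m * Real.exp (z' ℓ - z ℓ - m) := h2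
      _ = Real.exp (z ℓ + m + (z' ℓ - z ℓ - m)) := by rw [← Real.exp_add, ← Real.exp_add]
      _ = Real.exp (z' ℓ) := by ring_nf
  have hsum : ∑ ℓ, Real.exp (z ℓ) * (Real.exp m * (1 + (z' ℓ - z ℓ - m))) ≤ ∑ ℓ, Real.exp (z' ℓ) :=
    Finset.sum_le_sum (fun ℓ _ => key ℓ)
  have hrw : ∑ ℓ, Real.exp (z ℓ) * (Real.exp m * (1 + (z' ℓ - z ℓ - m))) = S * Real.exp m := by
    rw [exp_sum_rw z z' m, sum_exp_delta z z', ← hS, ← hm]; ring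
  linarith

lemma tangent_split {K : ℕ} (z z' : Fin K → ℝ) (k : Fin K) :
    ∑ ℓ, (softmax z ℓ - if ℓ = k then 1 else 0) * (z' ℓ - z ℓ)
      = (∑ ℓ, softmax z ℓ * (z' ℓ - z ℓ)) - (z' k - z k) := by
  simp only [sub_mul, Finset.sum_sub_distrib, ite_mul, one_mul, zero_mul]
  simp [Finset.sum_ite_eq']

lemma lce_tangent {K : ℕ} (hK : 0 < K) (z z' : Fin K → ℝ) (k : Fin K) :
    LCE z k + ∑ ℓ, (softmax z ℓ - if ℓ = k then 1 else 0) * (z' ℓ - z ℓ) ≤ LCE z' k := by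
  have hSpos := sum_exp_pos hK z
  have h := sum_exp_ge hK z z'
  have hlog : Real.log (∑ ℓ, Real.exp (z ℓ)) + (∑ ℓ, softmax z ℓ * (z' ℓ - z ℓ))
      ≤ Real.log (∑ ℓ, Real.exp (z' ℓ)) := by
    have := Real.log_le_log (by positivity) h
    rwa [Real.log_mul (ne_of_gt hSpos) (Real.exp_ne_zero _), Real.log_exp] at this
  rw [tangent_split]
  simp only [LCE]
  linarith

/-- Equality case: if tangent-line equality holds then all softmax values agree. -/
lemma lce_tangent_eq {K : ℕ} (hK : 0 < K) (z z' : Fin K → ℝ) (k : Fin K)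
    (heq : LCE z' k = LCE z k + ∑ ℓ, (softmax z ℓ - if ℓ = k then 1 else 0) * (z' ℓ - z ℓ)) :
    ∀ ℓ, softmax z' ℓ = softmax z ℓ := by
  set S := ∑ ℓ, Real.exp (z ℓ) with hS
  set m := ∑ ℓ, softmax z ℓ * (z' ℓ - z ℓ) with hm
  have hSpos : 0 < S := sum_exp_pos hK z
  have hS'pos : 0 < ∑ ℓ, Real.exp (z' ℓ) := sum_exp_pos hK z'
  -- from equality of LCE, get equality of log-sums
  have hlogeq : Real.log (∑ ℓ, Real.exp (z' ℓ)) = Real.log S + m := by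
    rw [tangent_split] at heq
    simp only [LCE] at heq
    linarith
  have hexpeq : ∑ ℓ, Real.exp (z' ℓ) = S * Real.exp m := by
    have := congrArg Real.exp hlogeq
    rwa [Real.exp_log hS'pos, Real.exp_add, Real.exp_log hSpos] at this
  -- each pointwise tangent inequality must be equality
  have key : ∀ ℓ : Fin K, Real.exp (z ℓ) * (Real.exp m * (1 + (z' ℓ - z ℓ - m))) ≤ Real.exp (z' ℓ) := by
    intro ℓ
    have h1 : (z' ℓ - z ℓ - m) + 1 ≤ Real.exp (z' ℓ - z ℓ - m) := Real.add_one_le_exp _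
    have h2 : Real.exp (z ℓ) * Real.exp m * ((z' ℓ - z ℓ - m) + 1)
        ≤ Real.exp (z ℓ) * Real.exp m * Real.exp (z' ℓ - z ℓ - m) :=
      mul_le_mul_of_nonneg_left h1 (by positivity)
    calc Real.exp (z ℓ) * (Real.exp m * (1 + (z' ℓ - z ℓ - m)))
        = Real.exp (z ℓ) * Real.exp m * ((z' ℓ - z ℓ - m) + 1) := by ring
      _ ≤ Real.exp (z ℓ) * Real.exp m * Real.exp (z' ℓ - z ℓ - m) := h2
      _ = Real.exp (z ℓ + m + (z' ℓ - z ℓ - m)) := by rw [← Real.exp_add, ← Real.exp_add]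
      _ = Real.exp (z' ℓ) := by ring_nf
  have hsumeq : ∑ ℓ, Real.exp (z ℓ) * (Real.exp m * (1 + (z' ℓ - z ℓ - m))) = S * Real.exp m := by
    rw [exp_sum_rw z z' m, sum_exp_delta z z', ← hS, ← hm]; ring
  -- termwise equality
  have termeq : ∀ ℓ : Fin K, Real.exp (z ℓ) * (Real.exp m * (1 + (z' ℓ - z ℓ - m))) = Real.exp (z' ℓ) := by
    intro ℓ
    have hle := Finset.sum_le_sum (fun ℓ (_ : ℓ ∈ Finset.univ) => key ℓ)
    have htot : ∑ ℓ, Real.exp (z ℓ) * (Real.exp m * (1 + (z' ℓ - z ℓ - m))) = ∑ ℓ, Real.exp (z' ℓ) := by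
      rw [hsumeq, hexpeq]
    have := (Finset.sum_eq_sum_iff_of_le (fun i (_ : i ∈ Finset.univ) => key i)).mp htot
    exact this ℓ (Finset.mem_univ ℓ)
  -- conclude δ_ℓ = m for all ℓ
  have hdelta : ∀ ℓ : Fin K, z' ℓ = z ℓ + m := by
    intro ℓ
    by_contra hne
    have hx : z' ℓ - z ℓ - m ≠ 0 := fun h => hne (by linarith [sub_eq_zero.mp (by linarith : (z' ℓ - z ℓ - m) = 0)])
    have hstrict : (z' ℓ - z ℓ - m) + 1 < Real.exp (z' ℓ - z ℓ - m) := Real.add_one_lt_exp hx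
    have := termeq ℓ
    have hcontra : Real.exp (z ℓ) * (Real.exp m * (1 + (z' ℓ - z ℓ - m))) < Real.exp (z' ℓ) := by
      calc Real.exp (z ℓ) * (Real.exp m * (1 + (z' ℓ - z ℓ - m)))
          = Real.exp (z ℓ) * Real.exp m * ((z' ℓ - z ℓ - m) + 1) := by ring
        _ < Real.exp (z ℓ) * Real.exp m * Real.exp (z' ℓ - z ℓ - m) := by
            exact mul_lt_mul_of_pos_left hstrict (by positivity)
        _ = Real.exp (z ℓ + m + (z' ℓ - z ℓ - m)) := by rw [← Real.exp_add, ← Real.exp_add]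
        _ = Real.exp (z' ℓ) := by ring_nf
    linarith
  -- softmax shift invariance
  intro ℓ
  have hnum : Real.exp (z' ℓ) = Real.exp m * Real.exp (z ℓ) := by
    rw [hdelta ℓ, ← Real.exp_add]; ring_nf
  have hden : ∑ ℓ', Real.exp (z' ℓ') = Real.exp m * S := by
    rw [hexpeq]; ring
  rw [softmax, softmax, hnum, hden, ← hS, mul_div_mul_left _ _ (Real.exp_ne_zero m)]

section spec
variable {K n : ℕ} (G : Matrix (Fin K) (Fin K × Fin n) ℝ)

lemma specNorm_nonneg : 0 ≤ specNorm G := norm_nonneg _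

lemma euclid_norm_eq (m : Type*) [Fintype m] (y : EuclideanSpace ℝ m) :
    ‖y‖ = Real.sqrt (∑ i, (y i)^2) := by
  rw [EuclideanSpace.norm_eq]
  congr 1
  exact Finset.sum_congr rfl (fun i _ => by rw [Real.norm_eq_abs, sq_abs])

/-- `‖G y‖ ≤ ‖G‖ ‖y‖` in coordinates. -/
lemma spec_mulVec_le (y : Fin K × Fin n → ℝ) :
    Real.sqrt (∑ ℓ, (G.mulVec y ℓ)^2) ≤ specNorm G * Real.sqrt (∑ j, (y j)^2) := by
  set Y : EuclideanSpace ℝ (Fin K × Fin n) := (WithLp.equiv 2 _).symm y with hY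
  have happ : (LinearMap.toContinuousLinearMap (Matrix.toEuclideanLin G)) Y
      = (WithLp.equiv 2 (Fin K → ℝ)).symm (G.mulVec y) := by
    rw [LinearMap.coe_toContinuousLinearMap', Matrix.toEuclideanLin_apply]
    simp [hY]
  have h := ContinuousLinearMap.le_opNorm (LinearMap.toContinuousLinearMap (Matrix.toEuclideanLin G)) Y
  rw [happ] at h
  have h1 : ‖(WithLp.equiv 2 (Fin K → ℝ)).symm (G.mulVec y)‖ = Real.sqrt (∑ ℓ, (G.mulVec y ℓ)^2) := by
    rw [euclid_norm_eq]; rfl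
  have h2 : ‖Y‖ = Real.sqrt (∑ j, (y j)^2) := by
    rw [euclid_norm_eq]; rfl
  rw [h1, h2] at h
  exact h

/-- lower bound: `‖G‖ √(∑ y²) ≥ √(∑ (Gy)²)`. -/
lemma spec_ge (y : Fin K × Fin n → ℝ) :
    Real.sqrt (∑ ℓ, (G.mulVec y ℓ)^2) ≤ specNorm G * Real.sqrt (∑ j, (y j)^2) :=
  spec_mulVec_le G y

/-- `‖Gᵀ x‖ ≤ ‖G‖ ‖x‖` in coordinates (via the duality trick). -/
lemma spec_vecMul_le (x : Fin K → ℝ) :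
    ∑ j, (∑ ℓ, x ℓ * G ℓ j)^2 ≤ specNorm G ^ 2 * ∑ ℓ, (x ℓ)^2 := by
  set y : Fin K × Fin n → ℝ := fun j => ∑ ℓ, x ℓ * G ℓ j with hy
  -- ∑_j y_j² = ∑_ℓ x_ℓ (G y)_ℓ
  have hfub : ∑ j, (y j)^2 = ∑ ℓ, x ℓ * (G.mulVec y ℓ) := by
    simp only [Matrix.mulVec, dotProduct, Finset.mul_sum]
    rw [Finset.sum_comm]
    refine Finset.sum_congr rfl (fun j _ => ?_)
    rw [hy]
    simp only [pow_two, Finset.sum_mul]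
    refine Finset.sum_congr rfl (fun ℓ _ => by ring)
  have hCS : (∑ ℓ, x ℓ * (G.mulVec y ℓ))^2 ≤ (∑ ℓ, (x ℓ)^2) * (∑ ℓ, (G.mulVec y ℓ)^2) :=
    Finset.sum_mul_sq_le_sq_mul_sq _ _ _
  have hGy : Real.sqrt (∑ ℓ, (G.mulVec y ℓ)^2) ≤ specNorm G * Real.sqrt (∑ j, (y j)^2) :=
    spec_mulVec_le G y
  -- now: (∑ y²)² = (∑ x (Gy))² ≤ (∑x²)(∑(Gy)²) ≤ (∑x²) ‖G‖² ∑ y²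
  have hs1 : ∑ ℓ, (G.mulVec y ℓ)^2 ≤ specNorm G ^2 * ∑ j, (y j)^2 := by
    have hnn1 : 0 ≤ ∑ ℓ, (G.mulVec y ℓ)^2 := Finset.sum_nonneg (fun _ _ => sq_nonneg _)
    have hnn2 : 0 ≤ specNorm G * Real.sqrt (∑ j, (y j)^2) :=
      mul_nonneg (specNorm_nonneg G) (Real.sqrt_nonneg _)
    have := mul_self_le_mul_self (Real.sqrt_nonneg _) hGy
    rwa [Real.mul_self_sqrt hnn1, mul_mul_mul_comm, Real.mul_self_sqrt
      (Finset.sum_nonneg (fun _ _ => sq_nonneg _)), ← pow_two] at this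
  have hynn : 0 ≤ ∑ j, (y j)^2 := Finset.sum_nonneg (fun _ _ => sq_nonneg _)
  have hxnn : 0 ≤ ∑ ℓ, (x ℓ)^2 := Finset.sum_nonneg (fun _ _ => sq_nonneg _)
  have chain : (∑ j, (y j)^2)^2 ≤ (∑ ℓ, (x ℓ)^2) * (specNorm G^2 * ∑ j, (y j)^2) := by
    calc (∑ j, (y j)^2)^2 = (∑ ℓ, x ℓ * (G.mulVec y ℓ))^2 := by rw [hfub]
      _ ≤ (∑ ℓ, (x ℓ)^2) * (∑ ℓ, (G.mulVec y ℓ)^2) := hCS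
      _ ≤ (∑ ℓ, (x ℓ)^2) * (specNorm G^2 * ∑ j, (y j)^2) := by
          exact mul_le_mul_of_nonneg_left hs1 hxnn
  rcases eq_or_lt_of_le hynn with h0 | hpos
  · rw [← h0]; positivity
  · have := (mul_le_mul_iff_left₀ hpos).mp (by linarith [chain] : (∑ j, (y j)^2) * (∑ j, (y j)^2) ≤ ((∑ ℓ, (x ℓ)^2) * specNorm G^2) * (∑ j, (y j)^2))
    calc ∑ j, (y j)^2 ≤ (∑ ℓ, (x ℓ)^2) * specNorm G^2 := this
      _ = specNorm G^2 * ∑ ℓ, (x ℓ)^2 := by ring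
end spec

section spec2
variable {K n : ℕ} (G : Matrix (Fin K) (Fin K × Fin n) ℝ)

lemma specNorm_le_bound {M : ℝ} (hM : 0 ≤ M)
    (h : ∀ y : Fin K × Fin n → ℝ, ∑ ℓ, (G.mulVec y ℓ)^2 ≤ M^2 * ∑ j, (y j)^2) :
    specNorm G ≤ M := by
  apply ContinuousLinearMap.opNorm_le_bound _ hM
  intro Y
  have happ : (LinearMap.toContinuousLinearMap (Matrix.toEuclideanLin G)) Y
      = (WithLp.equiv 2 (Fin K → ℝ)).symm (G.mulVec ((WithLp.equiv 2 _) Y)) := by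
    rw [LinearMap.coe_toContinuousLinearMap', Matrix.toEuclideanLin_apply]
    rfl
  rw [happ]
  have h1 : ‖(WithLp.equiv 2 (Fin K → ℝ)).symm (G.mulVec ((WithLp.equiv 2 _) Y))‖
      = Real.sqrt (∑ ℓ, (G.mulVec ((WithLp.equiv 2 _) Y) ℓ)^2) := by
    rw [euclid_norm_eq]; rfl
  have h2 : ‖Y‖ = Real.sqrt (∑ j, (((WithLp.equiv 2 _) Y) j)^2) := by
    rw [euclid_norm_eq]; rfl
  rw [h1, h2]
  set y := (WithLp.equiv 2 _) Y
  calc Real.sqrt (∑ ℓ, (G.mulVec y ℓ)^2) ≤ Real.sqrt (M^2 * ∑ j, (y j)^2) :=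
        Real.sqrt_le_sqrt (h y)
    _ = M * Real.sqrt (∑ j, (y j)^2) := by
        rw [Real.sqrt_mul (sq_nonneg M), Real.sqrt_sq hM]

lemma specNorm_lower {c : ℝ} (hc : 0 ≤ c) (y : Fin K × Fin n → ℝ)
    (h : c^2 * ∑ j, (y j)^2 ≤ ∑ ℓ, (G.mulVec y ℓ)^2) (hy : 0 < ∑ j, (y j)^2) :
    c ≤ specNorm G := by
  have h1 : c * Real.sqrt (∑ j, (y j)^2) ≤ Real.sqrt (∑ ℓ, (G.mulVec y ℓ)^2) := by
    have : Real.sqrt (c^2 * ∑ j, (y j)^2) ≤ Real.sqrt (∑ ℓ, (G.mulVec y ℓ)^2) :=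
      Real.sqrt_le_sqrt h
    rwa [Real.sqrt_mul (sq_nonneg c), Real.sqrt_sq hc] at this
  have h2 := spec_mulVec_le G y
  have h3 : 0 < Real.sqrt (∑ j, (y j)^2) := Real.sqrt_pos.mpr hy
  have := le_trans h1 h2
  exact le_of_mul_le_mul_right (by linarith [mul_comm c (Real.sqrt (∑ j, (y j)^2))] ) h3

end spec2

section struct
variable {K n : ℕ}

lemma sum_double_ite {X Y : ℝ} {a b : Fin K} (hab : a ≠ b) :
    ∑ k, (if k = a then X else if k = b then Y else 0) = X + Y := by
  have : ∀ k : Fin K, (if k = a then X else if k = b then Y else 0)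
      = (if k = a then X else 0) + (if k = b then Y else 0) := by
    intro k
    by_cases h1 : k = a
    · have h2 : ¬ k = b := by rw [h1]; exact hab
      simp [h1, h2, hab]
    · by_cases h2 : k = b
      · have hba : ¬ b = a := fun h => hab h.symm
        simp [h1, h2, hba]
      · simp [h1, h2]
  simp only [this, Finset.sum_add_distrib, Finset.sum_ite_eq', Finset.mem_univ, if_true]

lemma specNorm_struct (hK : 2 ≤ K) (hn : 1 ≤ n) {c : ℝ} (hc : 0 ≤ c)
    (G : Matrix (Fin K) (Fin K × Fin n) ℝ)
    (hG : ∀ ℓ j, G ℓ j = c * (1 - K * (if ℓ = j.1 then 1 else 0))) :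
    specNorm G = c * ((K:ℝ) * Real.sqrt n) := by
  have hKpos : (0:ℝ) < K := by positivity
  have hnpos : (0:ℝ) < n := by exact_mod_cast hn
  -- mulVec formula
  have hmv : ∀ (y : Fin K × Fin n → ℝ) (ℓ : Fin K),
      G.mulVec y ℓ = c * ((∑ j, y j) - K * ∑ i, y (ℓ, i)) := by
    intro y ℓ
    simp only [Matrix.mulVec, dotProduct]
    have : ∀ j : Fin K × Fin n, G ℓ j * y j = c * y j - c * K * (if ℓ = j.1 then 1 else 0) * y j := by
      intro j; rw [hG]; ring
    rw [Finset.sum_congr rfl (fun j _ => this j), Finset.sum_sub_distrib]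
    have e1 : ∑ j : Fin K × Fin n, c * y j = c * ∑ j, y j := by rw [Finset.mul_sum]
    have e2 : ∑ j : Fin K × Fin n, c * K * (if ℓ = j.1 then 1 else 0) * y j
        = c * K * ∑ i, y (ℓ, i) := by
      rw [Fintype.sum_prod_type, Finset.mul_sum]
      have : ∀ k : Fin K, ∑ i : Fin n, c * K * (if ℓ = k then 1 else 0) * y (k, i)
          = if k = ℓ then c * K * ∑ i, y (k, i) else 0 := by
        intro k
        by_cases h : ℓ = k
        · subst h; simp [Finset.mul_sum]
        · simp [h, Ne.symm h]
      rw [Finset.sum_congr rfl (fun k _ => this k), Finset.sum_ite_eq']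
      simp [Finset.mul_sum]
    rw [e1, e2]; ring
  have hsq : Real.sqrt n ^ 2 = (n:ℝ) := Real.sq_sqrt hnpos.le
  apply le_antisymm
  · -- upper bound
    apply specNorm_le_bound _ (by positivity)
    intro y
    set T := ∑ j, y j with hT
    set s : Fin K → ℝ := fun ℓ => ∑ i, y (ℓ, i) with hs
    have e0 : ∑ ℓ, s ℓ = T := by rw [hT, Fintype.sum_prod_type]
    have eq1 : ∑ ℓ, (G.mulVec y ℓ)^2 = c^2 * ∑ ℓ, (T - K * s ℓ)^2 := by
      rw [Finset.mul_sum]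
      exact Finset.sum_congr rfl (fun ℓ _ => by rw [hmv y ℓ]; ring)
    have eq2 : ∑ ℓ, (T - K * s ℓ)^2
        = K * T^2 - 2 * K * T * T + K^2 * ∑ ℓ, (s ℓ)^2 := by
      have : ∀ ℓ : Fin K, (T - K * s ℓ)^2 = T^2 - 2 * K * T * (s ℓ) + K^2 * (s ℓ)^2 := by
        intro ℓ; ring
      rw [Finset.sum_congr rfl (fun ℓ _ => this ℓ)]
      rw [Finset.sum_add_distrib, Finset.sum_sub_distrib, ← Finset.mul_sum, ← Finset.mul_sum, e0]
      simp [Finset.sum_const, Finset.card_univ, mul_comm]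
    have hCS : ∀ ℓ : Fin K, (s ℓ)^2 ≤ (n:ℝ) * ∑ i, (y (ℓ, i))^2 := by
      intro ℓ
      have := Finset.sum_mul_sq_le_sq_mul_sq Finset.univ (fun _ : Fin n => (1:ℝ)) (fun i => y (ℓ, i))
      simpa [hs] using this
    have hsums : ∑ ℓ, (s ℓ)^2 ≤ (n:ℝ) * ∑ j, (y j)^2 := by
      rw [Fintype.sum_prod_type, Finset.mul_sum]
      exact Finset.sum_le_sum (fun ℓ _ => hCS ℓ)
    have hM2 : (c * ((K:ℝ) * Real.sqrt n))^2 = c^2 * ((K:ℝ)^2 * n) := by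
      rw [mul_pow, mul_pow, hsq]
    rw [eq1, eq2, hM2]
    have hstep : (K:ℝ)^2 * ∑ ℓ, (s ℓ)^2 ≤ (K:ℝ)^2 * ((n:ℝ) * ∑ j, (y j)^2) :=
      mul_le_mul_of_nonneg_left hsums (sq_nonneg (K:ℝ))
    have hKT : 0 ≤ (K:ℝ) * T^2 := mul_nonneg hKpos.le (sq_nonneg T)
    have h1 : (K:ℝ) * T^2 - 2 * K * T * T + K^2 * ∑ ℓ, (s ℓ)^2 ≤ (K:ℝ)^2 * ((n:ℝ) * ∑ j, (y j)^2) := by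
      have : (2:ℝ) * K * T * T = 2 * (K * T^2) := by ring
      linarith [hstep, hKT]
    calc c^2 * ((K:ℝ) * T^2 - 2 * K * T * T + K^2 * ∑ ℓ, (s ℓ)^2)
        ≤ c^2 * ((K:ℝ)^2 * ((n:ℝ) * ∑ j, (y j)^2)) := mul_le_mul_of_nonneg_left h1 (sq_nonneg c)
      _ = c^2 * ((K:ℝ)^2 * n) * ∑ j, (y j)^2 := by ring
  · -- lower bound
    have h01 : (⟨0, by omega⟩ : Fin K) ≠ (⟨1, by omega⟩ : Fin K) := by
      simp [Fin.ext_iff]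
    set a : Fin K := ⟨0, by omega⟩
    set b : Fin K := ⟨1, by omega⟩
    set sgn : Fin K → ℝ := fun k => if k = a then 1 else if k = b then -1 else 0 with hsgn
    set y₀ : Fin K × Fin n → ℝ := fun j => sgn j.1 with hy₀
    have hsgn_sq : ∑ k, (sgn k)^2 = 2 := by
      have : ∀ k : Fin K, (sgn k)^2 = if k = a then (1:ℝ) else if k = b then 1 else 0 := by
        intro k
        by_cases h1 : k = a
        · simp [hsgn, h1]
        · by_cases h2 : k = b <;> simp [hsgn, h1, h2]
      rw [Finset.sum_congr rfl (fun k _ => this k), sum_double_ite h01]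
      norm_num
    have hsgn_sum : ∑ k, sgn k = 0 := by
      rw [hsgn, sum_double_ite h01]; norm_num
    have hys : ∀ ℓ : Fin K, (∑ i : Fin n, y₀ (ℓ, i)) = n * sgn ℓ := by
      intro ℓ; rw [hy₀]; simp only [Finset.sum_const, Finset.card_univ, Fintype.card_fin, nsmul_eq_mul]
    have hyT : ∑ j, y₀ j = 0 := by
      rw [Fintype.sum_prod_type]
      calc ∑ k, ∑ i : Fin n, y₀ (k, i) = ∑ k, (n:ℝ) * sgn k := Finset.sum_congr rfl (fun k _ => hys k)
        _ = (n:ℝ) * ∑ k, sgn k := by rw [Finset.mul_sum]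
        _ = 0 := by rw [hsgn_sum]; ring
    have hysq : ∑ j, (y₀ j)^2 = (n:ℝ) * 2 := by
      rw [Fintype.sum_prod_type]
      have : ∀ k : Fin K, ∑ i : Fin n, (y₀ (k, i))^2 = (n:ℝ) * (sgn k)^2 := by
        intro k; rw [hy₀]; simp only [Finset.sum_const, Finset.card_univ, Fintype.card_fin, nsmul_eq_mul]
      rw [Finset.sum_congr rfl (fun k _ => this k), ← Finset.mul_sum, hsgn_sq]
    have hGy : ∑ ℓ, (G.mulVec y₀ ℓ)^2 = c^2 * (K:ℝ)^2 * (n:ℝ)^2 * 2 := by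
      have : ∀ ℓ : Fin K, (G.mulVec y₀ ℓ)^2 = c^2 * (K:ℝ)^2 * (n:ℝ)^2 * (sgn ℓ)^2 := by
        intro ℓ
        rw [hmv y₀ ℓ, hyT, hys ℓ]; ring
      rw [Finset.sum_congr rfl (fun ℓ _ => this ℓ), ← Finset.mul_sum, hsgn_sq]
    apply specNorm_lower G (by positivity) y₀
    · rw [hysq, hGy, mul_pow, mul_pow, hsq]
      exact le_of_eq (by ring)
    · rw [hysq]; positivity

end struct



/-! ### Bookkeeping for the linearized risk -/

noncomputable def ipG {d K n : ℕ} (τ : ℝ) (W : Matrix (Fin d) (Fin K) ℝ)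
    (H : Matrix (Fin d) (Fin K × Fin n) ℝ)
    (W' : Matrix (Fin d) (Fin K) ℝ) (H' : Matrix (Fin d) (Fin K × Fin n) ℝ) : ℝ :=
  ∑ j : Fin K × Fin n, ∑ ℓ, Gmat τ W H ℓ j * ∑ r, W' r ℓ * H' r j

lemma sum_alpha_eq {d K n : ℕ} (τ : ℝ) (W : Matrix (Fin d) (Fin K) ℝ)
    (H : Matrix (Fin d) (Fin K × Fin n) ℝ) :
    ∑ k, alphaCoef τ W H k = ipG τ W H W H := by
  unfold alphaCoef ipG
  simp only [Finset.mul_sum]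
  calc ∑ k : Fin K, ∑ r, ∑ j : Fin K × Fin n, W r k * (H r j * Gmat τ W H k j)
      = ∑ k : Fin K, ∑ j : Fin K × Fin n, ∑ r, W r k * (H r j * Gmat τ W H k j) :=
        Finset.sum_congr rfl (fun k _ => Finset.sum_comm)
    _ = ∑ j : Fin K × Fin n, ∑ k : Fin K, ∑ r, W r k * (H r j * Gmat τ W H k j) :=
        Finset.sum_comm
    _ = ∑ j : Fin K × Fin n, ∑ ℓ : Fin K, ∑ r, Gmat τ W H ℓ j * (W r ℓ * H r j) :=
        Finset.sum_congr rfl (fun j _ => Finset.sum_congr rfl (fun ℓ _ =>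
          Finset.sum_congr rfl (fun r _ => by ring)))

lemma ceRisk_eq {d K n : ℕ} (τ : ℝ) (W : Matrix (Fin d) (Fin K) ℝ)
    (H : Matrix (Fin d) (Fin K × Fin n) ℝ) :
    ceRisk τ W H = (1/((K:ℝ)*n)) * ∑ j : Fin K × Fin n, LCE (logits τ W H j) j.1 := by
  unfold ceRisk logits
  rw [Fintype.sum_prod_type]

lemma ceRisk_tangent {d K n : ℕ} (hK : 2 ≤ K) {τ : ℝ} (hτ : 0 < τ)
    (W W' : Matrix (Fin d) (Fin K) ℝ) (H H' : Matrix (Fin d) (Fin K × Fin n) ℝ) :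
    ceRisk τ W H + τ * (ipG τ W H W' H' - ipG τ W H W H) ≤ ceRisk τ W' H' := by
  have hK0 : 0 < K := by omega
  have key : ∀ j : Fin K × Fin n,
      LCE (logits τ W H j) j.1 + ∑ ℓ, (softmax (logits τ W H j) ℓ - if ℓ = j.1 then 1 else 0) *
        (logits τ W' H' j ℓ - logits τ W H j ℓ) ≤ LCE (logits τ W' H' j) j.1 :=
    fun j => lce_tangent hK0 _ _ _
  have hsum := Finset.sum_le_sum (fun j (_ : j ∈ Finset.univ) => key j)
  have hNnn : (0:ℝ) ≤ 1/((K:ℝ)*n) := by positivity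
  have hmul := mul_le_mul_of_nonneg_left hsum hNnn
  rw [ceRisk_eq τ W H, ceRisk_eq τ W' H']
  have mid : (1/((K:ℝ)*n)) * ∑ j : Fin K × Fin n, ∑ ℓ,
      (softmax (logits τ W H j) ℓ - if ℓ = j.1 then 1 else 0) *
        (logits τ W' H' j ℓ - logits τ W H j ℓ)
      = τ * (ipG τ W H W' H' - ipG τ W H W H) := by
    have rhs : τ * (ipG τ W H W' H' - ipG τ W H W H)
        = ∑ j : Fin K × Fin n, (τ * ∑ ℓ, Gmat τ W H ℓ j * ∑ r, W' r ℓ * H' r j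
            - τ * ∑ ℓ, Gmat τ W H ℓ j * ∑ r, W r ℓ * H r j) := by
      unfold ipG
      rw [mul_sub, Finset.mul_sum, Finset.mul_sum, ← Finset.sum_sub_distrib]
    rw [rhs, Finset.mul_sum]
    refine Finset.sum_congr rfl (fun j _ => ?_)
    rw [Finset.mul_sum, Finset.mul_sum, Finset.mul_sum, ← Finset.sum_sub_distrib]
    refine Finset.sum_congr rfl (fun ℓ _ => ?_)
    show (1/((K:ℝ)*n)) * ((softmax (logits τ W H j) ℓ - if ℓ = j.1 then 1 else 0) *
        (logits τ W' H' j ℓ - logits τ W H j ℓ)) = _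
    unfold Gmat logits
    ring
  calc (1/((K:ℝ)*n)) * ∑ j : Fin K × Fin n, LCE (logits τ W H j) j.1
        + τ * (ipG τ W H W' H' - ipG τ W H W H)
      = (1/((K:ℝ)*n)) * ∑ j : Fin K × Fin n, (LCE (logits τ W H j) j.1
          + ∑ ℓ, (softmax (logits τ W H j) ℓ - if ℓ = j.1 then 1 else 0) *
            (logits τ W' H' j ℓ - logits τ W H j ℓ)) := by
        rw [← mid, Finset.sum_add_distrib, mul_add]
    _ ≤ (1/((K:ℝ)*n)) * ∑ j : Fin K × Fin n, LCE (logits τ W' H' j) j.1 := hmul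

lemma ipG_lower {d K n : ℕ} (τ : ℝ) (W : Matrix (Fin d) (Fin K) ℝ)
    (H : Matrix (Fin d) (Fin K × Fin n) ℝ)
    (W' : Matrix (Fin d) (Fin K) ℝ) (H' : Matrix (Fin d) (Fin K × Fin n) ℝ)
    (hW' : W' ∈ OB d (Fin K)) (hH' : H' ∈ OB d (Fin K × Fin n)) :
    -((K:ℝ) * Real.sqrt n * specNorm (Gmat τ W H)) ≤ ipG τ W H W' H' := by
  set G := Gmat τ W H with hGdef
  set σ := specNorm G with hσ
  have hσnn : 0 ≤ σ := specNorm_nonneg G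
  set u : Fin d → Fin K × Fin n → ℝ := fun r j => ∑ ℓ, W' r ℓ * G ℓ j with hu
  have step1 : ipG τ W H W' H' = ∑ r, ∑ j, H' r j * u r j := by
    unfold ipG
    simp only [hu, Finset.mul_sum, ← hGdef]
    calc ∑ j : Fin K × Fin n, ∑ ℓ, ∑ r, G ℓ j * (W' r ℓ * H' r j)
        = ∑ j : Fin K × Fin n, ∑ r, ∑ ℓ, G ℓ j * (W' r ℓ * H' r j) :=
          Finset.sum_congr rfl (fun j _ => Finset.sum_comm)
      _ = ∑ r, ∑ j : Fin K × Fin n, ∑ ℓ, G ℓ j * (W' r ℓ * H' r j) := Finset.sum_comm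
      _ = ∑ r, ∑ j : Fin K × Fin n, ∑ ℓ, H' r j * (W' r ℓ * G ℓ j) :=
          Finset.sum_congr rfl (fun r _ => Finset.sum_congr rfl (fun j _ =>
            Finset.sum_congr rfl (fun ℓ _ => by ring)))
  have hCS : (∑ r, ∑ j, H' r j * u r j)^2
      ≤ (∑ r, ∑ j, (H' r j)^2) * (∑ r, ∑ j, (u r j)^2) := by
    have := Finset.sum_mul_sq_le_sq_mul_sq Finset.univ
      (fun p : Fin d × (Fin K × Fin n) => H' p.1 p.2) (fun p => u p.1 p.2)
    rw [Fintype.sum_prod_type, Fintype.sum_prod_type, Fintype.sum_prod_type] at this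
    exact this
  have hH2 : ∑ r, ∑ j, (H' r j)^2 = ((K:ℝ)*n) := by
    rw [Finset.sum_comm]
    have : ∀ j : Fin K × Fin n, ∑ r, (H' r j)^2 = 1 := hH'
    rw [Finset.sum_congr rfl (fun j _ => this j)]
    simp [Finset.card_univ, mul_comm]
  have hu2 : ∑ r, ∑ j, (u r j)^2 ≤ σ^2 * (K:ℝ) := by
    have hr : ∀ r, ∑ j, (u r j)^2 ≤ σ^2 * ∑ ℓ, (W' r ℓ)^2 := by
      intro r
      exact spec_vecMul_le G (fun ℓ => W' r ℓ)
    calc ∑ r, ∑ j, (u r j)^2 ≤ ∑ r, σ^2 * ∑ ℓ, (W' r ℓ)^2 :=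
          Finset.sum_le_sum (fun r _ => hr r)
      _ = σ^2 * ∑ r, ∑ ℓ, (W' r ℓ)^2 := by rw [Finset.mul_sum]
      _ = σ^2 * (K:ℝ) := by
          rw [Finset.sum_comm]
          have : ∀ ℓ : Fin K, ∑ r, (W' r ℓ)^2 = 1 := hW'
          rw [Finset.sum_congr rfl (fun ℓ _ => this ℓ)]
          simp [Finset.card_univ]
  have hB : (ipG τ W H W' H')^2 ≤ ((K:ℝ) * Real.sqrt n * σ)^2 := by
    have h1 : (ipG τ W H W' H')^2 ≤ ((K:ℝ)*n) * (σ^2 * (K:ℝ)) := by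
      rw [step1]
      calc (∑ r, ∑ j, H' r j * u r j)^2
          ≤ (∑ r, ∑ j, (H' r j)^2) * (∑ r, ∑ j, (u r j)^2) := hCS
        _ ≤ ((K:ℝ)*n) * (σ^2 * (K:ℝ)) := by
            rw [hH2]
            have hNnn : (0:ℝ) ≤ (K:ℝ)*n := by positivity
            exact mul_le_mul_of_nonneg_left hu2 hNnn
    have h2 : ((K:ℝ) * Real.sqrt n * σ)^2 = ((K:ℝ)*n) * (σ^2 * (K:ℝ)) := by
      have : Real.sqrt n ^ 2 = (n:ℝ) := Real.sq_sqrt (by positivity)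
      rw [mul_pow, mul_pow, this]; ring
    rw [h2]; exact h1
  have habs : |ipG τ W H W' H'| ≤ (K:ℝ) * Real.sqrt n * σ := by
    have hnn : (0:ℝ) ≤ (K:ℝ) * Real.sqrt n * σ := by positivity
    have := Real.sqrt_le_sqrt hB
    rwa [Real.sqrt_sq_eq_abs, Real.sqrt_sq hnn] at this
  linarith [neg_abs_le (ipG τ W H W' H')]



/-! ### The simplex-ETF reference point -/

noncomputable def Dq (K : ℕ) (τ : ℝ) : ℝ :=
  Real.exp τ + ((K:ℝ) - 1) * Real.exp (-τ / ((K:ℝ) - 1))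

noncomputable def bq (K : ℕ) (τ : ℝ) : ℝ := Real.exp (-τ / ((K:ℝ) - 1)) / Dq K τ

noncomputable def zstar (K : ℕ) (τ : ℝ) (k : Fin K) : Fin K → ℝ :=
  fun ℓ => if ℓ = k then τ else -τ / ((K:ℝ) - 1)

section anchor

variable {K : ℕ} (hK : 2 ≤ K) (τ : ℝ)

lemma hKr1 (hK : 2 ≤ K) : (1:ℝ) ≤ (K:ℝ) - 1 := by
  have : (2:ℝ) ≤ (K:ℝ) := by exact_mod_cast hK
  linarith

lemma Dq_pos (hK : 2 ≤ K) : 0 < Dq K τ := by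
  have h1 := hKr1 hK
  have h2 := Real.exp_pos τ
  have h3 := Real.exp_pos (-τ / ((K:ℝ) - 1))
  unfold Dq; nlinarith

lemma bq_pos (hK : 2 ≤ K) : 0 < bq K τ := div_pos (Real.exp_pos _) (Dq_pos τ hK)

lemma sum_ite_const {K : ℕ} (k : Fin K) (X Y : ℝ) :
    ∑ ℓ : Fin K, (if ℓ = k then X else Y) = X + ((K:ℝ) - 1) * Y := by
  have h : ∀ ℓ : Fin K, (if ℓ = k then X else Y) = Y + (if ℓ = k then X - Y else 0) := by
    intro ℓ; by_cases h : ℓ = k <;> simp [h]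
  rw [Finset.sum_congr rfl (fun ℓ _ => h ℓ), Finset.sum_add_distrib, Finset.sum_ite_eq',
    Finset.sum_const, Finset.card_univ, Fintype.card_fin, nsmul_eq_mul]
  simp only [Finset.mem_univ, if_true]
  ring

lemma sum_exp_zstar (hK : 2 ≤ K) (k : Fin K) :
    ∑ ℓ, Real.exp (zstar K τ k ℓ) = Dq K τ := by
  have h : ∀ ℓ : Fin K, Real.exp (zstar K τ k ℓ)
      = if ℓ = k then Real.exp τ else Real.exp (-τ / ((K:ℝ) - 1)) := by
    intro ℓ; unfold zstar; by_cases h : ℓ = k <;> simp [h]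
  rw [Finset.sum_congr rfl (fun ℓ _ => h ℓ), sum_ite_const]
  rfl

lemma LCE_zstar (hK : 2 ≤ K) (k : Fin K) :
    LCE (zstar K τ k) k = Real.log (Dq K τ) - τ := by
  unfold LCE
  rw [sum_exp_zstar τ hK k]
  simp [zstar]

lemma softmax_zstar (hK : 2 ≤ K) (k ℓ : Fin K) :
    softmax (zstar K τ k) ℓ
      = (if ℓ = k then Real.exp τ else Real.exp (-τ / ((K:ℝ) - 1))) / Dq K τ := by
  unfold softmax
  rw [sum_exp_zstar τ hK k]
  by_cases h : ℓ = k <;> simp [zstar, h]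

lemma pdiff (hK : 2 ≤ K) (k ℓ : Fin K) :
    softmax (zstar K τ k) ℓ - (if ℓ = k then 1 else 0)
      = bq K τ * (1 - (K:ℝ) * (if ℓ = k then 1 else 0)) := by
  have hD := Dq_pos τ hK
  rw [softmax_zstar τ hK k ℓ]
  unfold bq
  by_cases h : ℓ = k
  · simp only [h, if_true]
    field_simp
    unfold Dq
    ring
  · simp only [h, if_false]
    ring

lemma sum_zstar (hK : 2 ≤ K) (k : Fin K) : ∑ ℓ, zstar K τ k ℓ = 0 := by
  have h1 := hKr1 hK
  unfold zstar
  rw [sum_ite_const]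
  field_simp
  ring

lemma mid_eq (hK : 2 ≤ K) (z : Fin K → ℝ) (k : Fin K) :
    ∑ ℓ, (softmax (zstar K τ k) ℓ - if ℓ = k then 1 else 0) * (z ℓ - zstar K τ k ℓ)
      = bq K τ * ((∑ ℓ, z ℓ) - (K:ℝ) * z k) + bq K τ * (K:ℝ) * τ := by
  have h : ∀ ℓ : Fin K, (softmax (zstar K τ k) ℓ - if ℓ = k then 1 else 0) * (z ℓ - zstar K τ k ℓ)
      = bq K τ * (z ℓ - zstar K τ k ℓ)
        - bq K τ * (K:ℝ) * (if ℓ = k then z ℓ - zstar K τ k ℓ else 0) := by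
    intro ℓ
    rw [pdiff τ hK k ℓ]
    by_cases h : ℓ = k <;> simp [h] <;> ring
  rw [Finset.sum_congr rfl (fun ℓ _ => h ℓ), Finset.sum_sub_distrib, ← Finset.mul_sum,
    ← Finset.mul_sum, Finset.sum_sub_distrib, sum_zstar τ hK k, Finset.sum_ite_eq']
  simp only [Finset.mem_univ, if_true]
  have : zstar K τ k k = τ := by simp [zstar]
  rw [this]
  ring

lemma lce_lower (hK : 2 ≤ K) (z : Fin K → ℝ) (k : Fin K) :
    Real.log (Dq K τ) - τ + (bq K τ * ((∑ ℓ, z ℓ) - (K:ℝ) * z k) + bq K τ * (K:ℝ) * τ)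
      ≤ LCE z k := by
  have h := lce_tangent (by omega : 0 < K) (zstar K τ k) z k
  rw [LCE_zstar τ hK k, mid_eq τ hK z k] at h
  linarith

lemma lce_lower_eq (hK : 2 ≤ K) (z : Fin K → ℝ) (k : Fin K)
    (h : LCE z k = Real.log (Dq K τ) - τ
      + (bq K τ * ((∑ ℓ, z ℓ) - (K:ℝ) * z k) + bq K τ * (K:ℝ) * τ)) :
    ∀ ℓ, softmax z ℓ
      = (if ℓ = k then Real.exp τ else Real.exp (-τ / ((K:ℝ) - 1))) / Dq K τ := by
  intro ℓ
  have heq : LCE z k = LCE (zstar K τ k) k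
      + ∑ ℓ, (softmax (zstar K τ k) ℓ - if ℓ = k then 1 else 0) * (z ℓ - zstar K τ k ℓ) := by
    rw [LCE_zstar τ hK k, mid_eq τ hK z k]; linarith
  have := lce_tangent_eq (by omega : 0 < K) (zstar K τ k) z k heq ℓ
  rw [this, softmax_zstar τ hK k ℓ]

end anchor


/-! ### ETF construction attaining the lower bound -/

noncomputable def Wstar (d K : ℕ) : Matrix (Fin d) (Fin K) ℝ :=
  fun r k => if (r:ℕ) < K then
    Real.sqrt ((K:ℝ)/((K:ℝ)-1)) * ((if (r:ℕ) = (k:ℕ) then 1 else 0) - 1/(K:ℝ)) else 0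

lemma Wstar_inner {d K : ℕ} (hK : 2 ≤ K) (hdK : K ≤ d) (k k' : Fin K) :
    ∑ r, Wstar d K r k * Wstar d K r k'
      = if k = k' then 1 else -1/((K:ℝ)-1) := by
  have hK1 : (1:ℝ) ≤ (K:ℝ) - 1 := hKr1 hK
  have hKpos : (0:ℝ) < K := by positivity
  set cc := Real.sqrt ((K:ℝ)/((K:ℝ)-1)) with hcc
  have hcc2 : cc * cc = (K:ℝ)/((K:ℝ)-1) :=
    Real.mul_self_sqrt (by positivity)
  set F : ℕ → ℝ := fun m => (if m < K then cc * ((if m = (k:ℕ) then 1 else 0) - 1/(K:ℝ)) else 0)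
    * (if m < K then cc * ((if m = (k':ℕ) then 1 else 0) - 1/(K:ℝ)) else 0) with hF
  have h0 : ∀ r : Fin d, Wstar d K r k * Wstar d K r k' = F (r:ℕ) := by
    intro r
    unfold Wstar
    rw [hF]
  rw [Finset.sum_congr rfl (fun r _ => h0 r), Fin.sum_univ_eq_sum_range F d]
  have h1 : ∑ m ∈ Finset.range d, F m = ∑ m ∈ Finset.range K, F m := by
    refine (Finset.sum_subset (Finset.range_subset_range.mpr hdK) ?_).symm
    intro x _ hx
    have : ¬ x < K := by simpa [Finset.mem_range] using hx
    rw [hF]; simp [this]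
  rw [h1]
  have h2 : ∀ m ∈ Finset.range K, F m
      = cc * cc * (((if m = (k:ℕ) then (1:ℝ) else 0) * (if m = (k':ℕ) then 1 else 0))
        - (1/(K:ℝ)) * (if m = (k:ℕ) then 1 else 0) - (1/(K:ℝ)) * (if m = (k':ℕ) then 1 else 0)
        + 1/(K:ℝ)^2) := by
    intro m hm
    have hmK : m < K := Finset.mem_range.mp hm
    rw [hF]; simp only [hmK, if_true]; ring
  rw [Finset.sum_congr rfl h2, ← Finset.mul_sum]
  have e1 : ∑ m ∈ Finset.range K, (if m = (k:ℕ) then (1:ℝ) else 0) = 1 := by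
    rw [Finset.sum_ite_eq']; simp [Finset.mem_range, k.isLt]
  have e2 : ∑ m ∈ Finset.range K, (if m = (k':ℕ) then (1:ℝ) else 0) = 1 := by
    rw [Finset.sum_ite_eq']; simp [Finset.mem_range, k'.isLt]
  have e3 : ∑ m ∈ Finset.range K, ((if m = (k:ℕ) then (1:ℝ) else 0) * (if m = (k':ℕ) then 1 else 0))
      = if k = k' then 1 else 0 := by
    have : ∀ m, ((if m = (k:ℕ) then (1:ℝ) else 0) * (if m = (k':ℕ) then 1 else 0))
        = if m = (k:ℕ) then (if (k:ℕ) = (k':ℕ) then (1:ℝ) else 0) else 0 := by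
      intro m
      by_cases h : m = (k:ℕ)
      · by_cases h' : m = (k':ℕ)
        · simp [h, h', h.symm.trans h']
        · have hkk : ¬ (k:ℕ) = (k':ℕ) := fun hh => h' (h.trans hh)
          simp [h, h', hkk]
      · simp [h]
    rw [Finset.sum_congr rfl (fun m _ => this m), Finset.sum_ite_eq']
    simp only [Finset.mem_range, k.isLt, if_true]
    congr 1
    simp [Fin.ext_iff]
  have e4 : ∑ m ∈ Finset.range K, (1/(K:ℝ)^2) = (K:ℝ) * (1/(K:ℝ)^2) := by
    rw [Finset.sum_const, Finset.card_range, nsmul_eq_mul]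
  have esum : ∑ m ∈ Finset.range K, (((if m = (k:ℕ) then (1:ℝ) else 0) * (if m = (k':ℕ) then 1 else 0))
        - (1/(K:ℝ)) * (if m = (k:ℕ) then 1 else 0) - (1/(K:ℝ)) * (if m = (k':ℕ) then 1 else 0)
        + 1/(K:ℝ)^2)
      = (if k = k' then 1 else 0) - 1/(K:ℝ) := by
    rw [Finset.sum_add_distrib, Finset.sum_sub_distrib, Finset.sum_sub_distrib,
      ← Finset.mul_sum, ← Finset.mul_sum, e1, e2, e3, e4]
    field_simp
    ring
  rw [esum, hcc2]
  by_cases h : k = k'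
  · simp only [h, if_true]; field_simp
  · simp only [h, if_false]; field_simp; ring

lemma Wstar_OB {d K : ℕ} (hK : 2 ≤ K) (hdK : K ≤ d) : Wstar d K ∈ OB d (Fin K) := by
  intro k
  have := Wstar_inner hK hdK k k
  simpa [pow_two] using this

lemma ceRisk_Wstar {d K n : ℕ} (hK : 2 ≤ K) (hdK : K ≤ d) (hn : 1 ≤ n) {τ : ℝ} :
    ceRisk τ (Wstar d K) (fun r (j : Fin K × Fin n) => Wstar d K r j.1)
      = Real.log (Dq K τ) - τ := by
  have hK1 : (1:ℝ) ≤ (K:ℝ) - 1 := hKr1 hK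
  have hNpos : (0:ℝ) < (K:ℝ)*n := by
    have h1 : (0:ℝ) < (K:ℝ) := by positivity
    have h2 : (0:ℝ) < (n:ℝ) := by exact_mod_cast hn
    positivity
  refine (ceRisk_eq _ _ _).trans ?_
  have hlog : ∀ j : Fin K × Fin n,
      logits τ (Wstar d K) (fun r (j : Fin K × Fin n) => Wstar d K r j.1) j = zstar K τ j.1 := by
    intro j
    funext ℓ
    unfold logits zstar
    rw [Wstar_inner hK hdK ℓ j.1]
    by_cases h : ℓ = j.1
    · simp [h]
    · simp only [h, if_false]
      field_simp
  have : ∀ j : Fin K × Fin n,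
      LCE (logits τ (Wstar d K) (fun r (j : Fin K × Fin n) => Wstar d K r j.1) j) j.1
        = Real.log (Dq K τ) - τ := by
    intro j
    rw [hlog j, LCE_zstar τ hK j.1]
  rw [Finset.sum_congr rfl (fun j _ => this j), Finset.sum_const, Finset.card_univ]
  simp only [Fintype.card_prod, Fintype.card_fin, nsmul_eq_mul]
  push_cast
  field_simp


/-! ### Structure of global minimizers -/

set_option maxHeartbeats 1000000 in
lemma global_structure {d K n : ℕ} (hK : 2 ≤ K) (hn : 1 ≤ n) {τ : ℝ} (hτ : 0 < τ)
    (W : Matrix (Fin d) (Fin K) ℝ) (H : Matrix (Fin d) (Fin K × Fin n) ℝ)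
    (hW : W ∈ OB d (Fin K)) (hH : H ∈ OB d (Fin K × Fin n))
    (hf : ceRisk τ W H ≤ Real.log (Dq K τ) - τ) :
    (∀ r, ∑ k, W r k = 0) ∧ (∀ (j : Fin K × Fin n) r, H r j = W r j.1) ∧
    (∀ (j : Fin K × Fin n) ℓ, softmax (logits τ W H j) ℓ
      = (if ℓ = j.1 then Real.exp τ else Real.exp (-τ/((K:ℝ)-1))) / Dq K τ) := by
  have hK0 : 0 < K := by omega
  have hKr : (2:ℝ) ≤ (K:ℝ) := by exact_mod_cast hK
  have hnr : (1:ℝ) ≤ (n:ℝ) := by exact_mod_cast hn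
  have hNpos : (0:ℝ) < (K:ℝ)*(n:ℝ) := by nlinarith
  have hb : 0 < bq K τ := bq_pos τ hK
  set Lst := Real.log (Dq K τ) - τ with hLst
  set wbar : Fin d → ℝ := fun r => ∑ k, W r k with hwbar
  set t : Fin K × Fin n → ℝ := fun j => ∑ r, (wbar r - (K:ℝ) * W r j.1) * H r j with ht
  set q : Fin K → ℝ := fun k => ∑ r, (wbar r - (K:ℝ) * W r k)^2 with hq
  set Q : ℝ := ∑ r, (wbar r)^2 with hQ
  set eps : Fin K × Fin n → ℝ := fun j => LCE (logits τ W H j) j.1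
    - (Lst + (bq K τ * ((∑ ℓ, logits τ W H j ℓ) - (K:ℝ) * logits τ W H j j.1)
        + bq K τ * (K:ℝ) * τ)) with heps
  -- link between logit sums and `t`
  have hlink : ∀ j : Fin K × Fin n,
      (∑ ℓ, logits τ W H j ℓ) - (K:ℝ) * logits τ W H j j.1 = τ * t j := by
    intro j
    have e1 : ∑ ℓ, logits τ W H j ℓ = τ * ∑ r, wbar r * H r j := by
      unfold logits
      rw [← Finset.mul_sum]
      congr 1
      calc ∑ ℓ, ∑ r, W r ℓ * H r j = ∑ r, ∑ ℓ, W r ℓ * H r j := Finset.sum_comm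
        _ = ∑ r, wbar r * H r j := Finset.sum_congr rfl (fun r _ => by
            rw [hwbar, ← Finset.sum_mul])
    have e2 : logits τ W H j j.1 = τ * ∑ r, W r j.1 * H r j := rfl
    have e3 : t j = (∑ r, wbar r * H r j) - (K:ℝ) * ∑ r, W r j.1 * H r j := by
      rw [ht]
      simp only
      rw [Finset.mul_sum, ← Finset.sum_sub_distrib]
      exact Finset.sum_congr rfl (fun r _ => by ring)
    rw [e1, e2, e3]
    ring
  have hepsnn : ∀ j : Fin K × Fin n, 0 ≤ eps j := by
    intro j
    have := lce_lower τ hK (logits τ W H j) j.1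
    rw [heps]
    simp only
    rw [← hLst] at this
    linarith
  -- risk decomposition
  have hdecomp : ((K:ℝ)*n) * ceRisk τ W H
      = (∑ j, eps j) + ((K:ℝ)*n) * Lst + bq K τ * τ * (∑ j, t j)
        + ((K:ℝ)*n) * (bq K τ * (K:ℝ) * τ) := by
    rw [ceRisk_eq]
    have hNne : ((K:ℝ)*n) ≠ 0 := ne_of_gt hNpos
    rw [← mul_assoc, mul_one_div, div_self hNne, one_mul]
    have hterm : ∀ j : Fin K × Fin n, LCE (logits τ W H j) j.1
        = eps j + Lst + bq K τ * τ * t j + bq K τ * (K:ℝ) * τ := by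
      intro j
      rw [heps]
      simp only
      rw [hlink j]
      ring
    rw [Finset.sum_congr rfl (fun j _ => hterm j)]
    rw [Finset.sum_add_distrib, Finset.sum_add_distrib, Finset.sum_add_distrib,
      Finset.sum_const, Finset.sum_const, Finset.card_univ, Fintype.card_prod,
      Fintype.card_fin, Fintype.card_fin, nsmul_eq_mul, nsmul_eq_mul, ← Finset.mul_sum]
    push_cast
    ring
  -- Cauchy–Schwarz chain
  have hqnn : ∀ k, 0 ≤ q k := by
    intro k; rw [hq]; exact Finset.sum_nonneg (fun r _ => sq_nonneg _)
  have htlb : ∀ j : Fin K × Fin n, -Real.sqrt (q j.1) ≤ t j := by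
    intro j
    have hcs := Finset.sum_mul_sq_le_sq_mul_sq Finset.univ
      (fun r => wbar r - (K:ℝ) * W r j.1) (fun r => H r j)
    have h1 : (t j)^2 ≤ q j.1 := by
      rw [ht, hq]
      simp only
      calc (∑ r, (wbar r - (K:ℝ) * W r j.1) * H r j)^2
          ≤ (∑ r, (wbar r - (K:ℝ) * W r j.1)^2) * (∑ r, (H r j)^2) := hcs
        _ = ∑ r, (wbar r - (K:ℝ) * W r j.1)^2 := by rw [hH j, mul_one]
    have h2 : |t j| ≤ Real.sqrt (q j.1) := by
      rw [← Real.sqrt_sq_eq_abs]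
      exact Real.sqrt_le_sqrt h1
    linarith [neg_abs_le (t j)]
  have hsum_sqrt : ∑ j : Fin K × Fin n, Real.sqrt (q j.1) = (n:ℝ) * ∑ k, Real.sqrt (q k) := by
    rw [Fintype.sum_prod_type]
    rw [Finset.mul_sum]
    refine Finset.sum_congr rfl (fun k _ => ?_)
    have : ∀ y : Fin n, Real.sqrt (q (k, y).1) = Real.sqrt (q k) := fun y => rfl
    rw [Finset.sum_congr rfl (fun y _ => this y), Finset.sum_const, Finset.card_univ,
      Fintype.card_fin, nsmul_eq_mul]
  have hSsum_ge : -((n:ℝ) * ∑ k, Real.sqrt (q k)) ≤ ∑ j, t j := by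
    have := Finset.sum_le_sum (fun j (_ : j ∈ Finset.univ) => htlb j)
    rw [Finset.sum_neg_distrib] at this
    rw [← hsum_sqrt]
    linarith [this]
  have hqsum : ∑ k, q k = (K:ℝ)^2 * (K:ℝ) - (K:ℝ) * Q := by
    simp only [hq]
    rw [Finset.sum_comm]
    have hr : ∀ r : Fin d, ∑ k, (wbar r - (K:ℝ) * W r k)^2
        = (K:ℝ)^2 * (∑ k, (W r k)^2) - (K:ℝ) * (wbar r)^2 := by
      intro r
      have e : ∀ k : Fin K, (wbar r - (K:ℝ) * W r k)^2
          = (wbar r)^2 - 2*(K:ℝ)*wbar r * W r k + (K:ℝ)^2 * (W r k)^2 := by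
        intro k; ring
      rw [Finset.sum_congr rfl (fun k _ => e k), Finset.sum_add_distrib,
        Finset.sum_sub_distrib, ← Finset.mul_sum, ← Finset.mul_sum,
        Finset.sum_const, Finset.card_univ, Fintype.card_fin, nsmul_eq_mul]
      rw [hwbar]
      simp only
      ring
    rw [Finset.sum_congr rfl (fun r _ => hr r)]
    rw [Finset.sum_sub_distrib, ← Finset.mul_sum, ← Finset.mul_sum]
    have hWsum : ∑ r, ∑ k, (W r k)^2 = (K:ℝ) := by
      rw [Finset.sum_comm]
      rw [Finset.sum_congr rfl (fun k (_ : k ∈ Finset.univ) => hW k)]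
      rw [Finset.sum_const, Finset.card_univ, Fintype.card_fin, nsmul_eq_mul, mul_one]
    rw [hWsum, ← hQ]
  have hQnn : 0 ≤ Q := by
    rw [hQ]; exact Finset.sum_nonneg (fun r _ => sq_nonneg _)
  have hsqrtsq : (∑ k, Real.sqrt (q k))^2 ≤ (K:ℝ) * ∑ k, q k := by
    have hcs := Finset.sum_mul_sq_le_sq_mul_sq Finset.univ
      (fun _ : Fin K => (1:ℝ)) (fun k => Real.sqrt (q k))
    simp only [one_mul, one_pow] at hcs
    calc (∑ k, Real.sqrt (q k))^2 ≤ (∑ _k : Fin K, (1:ℝ)) * ∑ k, (Real.sqrt (q k))^2 := hcs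
      _ = (K:ℝ) * ∑ k, q k := by
          rw [Finset.sum_const, Finset.card_univ, Fintype.card_fin, nsmul_eq_mul, mul_one]
          congr 1
          exact Finset.sum_congr rfl (fun k _ => Real.sq_sqrt (hqnn k))
  have hsqrt_le : ∑ k, Real.sqrt (q k) ≤ (K:ℝ)^2 := by
    have hnn : 0 ≤ ∑ k, Real.sqrt (q k) :=
      Finset.sum_nonneg (fun k _ => Real.sqrt_nonneg _)
    have h1 : (∑ k, Real.sqrt (q k))^2 ≤ ((K:ℝ)^2)^2 := by
      calc (∑ k, Real.sqrt (q k))^2 ≤ (K:ℝ) * ∑ k, q k := hsqrtsq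
        _ = (K:ℝ) * ((K:ℝ)^2 * (K:ℝ) - (K:ℝ) * Q) := by rw [hqsum]
        _ ≤ ((K:ℝ)^2)^2 := by nlinarith
    calc ∑ k, Real.sqrt (q k) = Real.sqrt ((∑ k, Real.sqrt (q k))^2) :=
          (Real.sqrt_sq hnn).symm
      _ ≤ Real.sqrt (((K:ℝ)^2)^2) := Real.sqrt_le_sqrt h1
      _ = (K:ℝ)^2 := Real.sqrt_sq (by positivity)
  have hS_ge : -((K:ℝ)^2 * (n:ℝ)) ≤ ∑ j, t j := by
    have h1 : (n:ℝ) * ∑ k, Real.sqrt (q k) ≤ (n:ℝ) * (K:ℝ)^2 :=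
      mul_le_mul_of_nonneg_left hsqrt_le (by positivity)
    calc -((K:ℝ)^2 * (n:ℝ)) = -((n:ℝ) * (K:ℝ)^2) := by ring
      _ ≤ -((n:ℝ) * ∑ k, Real.sqrt (q k)) := by linarith
      _ ≤ ∑ j, t j := hSsum_ge
  -- equalities from hf
  have hfN : ((K:ℝ)*n) * ceRisk τ W H ≤ ((K:ℝ)*n) * Lst :=
    mul_le_mul_of_nonneg_left hf (le_of_lt hNpos)
  have hmain : (∑ j, eps j) + bq K τ * τ * ((∑ j, t j) + (K:ℝ)^2 * (n:ℝ)) ≤ 0 := by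
    have e : ((K:ℝ)*n) * (bq K τ * (K:ℝ) * τ) = bq K τ * τ * ((K:ℝ)^2 * (n:ℝ)) := by ring
    have e2 : bq K τ * τ * ((∑ j, t j) + (K:ℝ)^2 * (n:ℝ))
        = bq K τ * τ * (∑ j, t j) + bq K τ * τ * ((K:ℝ)^2 * (n:ℝ)) := by ring
    linarith [hdecomp, hfN]
  have hepsum_nn : 0 ≤ ∑ j, eps j := Finset.sum_nonneg (fun j _ => hepsnn j)
  have hbτ : 0 < bq K τ * τ := mul_pos hb hτ
  have hT_nn : 0 ≤ (∑ j, t j) + (K:ℝ)^2 * (n:ℝ) := by linarith [hS_ge]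
  have hprod_nn : 0 ≤ bq K τ * τ * ((∑ j, t j) + (K:ℝ)^2 * (n:ℝ)) :=
    mul_nonneg hbτ.le hT_nn
  have hepsum0 : ∑ j, eps j = 0 := le_antisymm (by linarith) hepsum_nn
  have hprod0 : bq K τ * τ * ((∑ j, t j) + (K:ℝ)^2 * (n:ℝ)) = 0 :=
    le_antisymm (by linarith) hprod_nn
  have hSeq : (∑ j, t j) = -((K:ℝ)^2 * (n:ℝ)) := by
    rcases mul_eq_zero.mp hprod0 with h | h
    · exact absurd h (ne_of_gt hbτ)
    · linarith
  -- (1) wbar = 0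
  have hQ0 : Q = 0 := by
    have h1 : (K:ℝ)^2 ≤ ∑ k, Real.sqrt (q k) := by
      have : -((n:ℝ) * ∑ k, Real.sqrt (q k)) ≤ -((K:ℝ)^2 * (n:ℝ)) := by
        rw [← hSeq]; exact hSsum_ge
      nlinarith
    have h2 : ((K:ℝ)^2)^2 ≤ (∑ k, Real.sqrt (q k))^2 :=
      pow_le_pow_left₀ (by positivity) h1 2
    have h3 := hsqrtsq
    rw [hqsum] at h3
    have h4 : (K:ℝ)^2 * Q ≤ 0 := by nlinarith
    have h5 : (0:ℝ) < (K:ℝ)^2 := by positivity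
    nlinarith
  have hwbar0 : ∀ r, wbar r = 0 := by
    intro r
    have h0 : ∑ r, (wbar r)^2 = 0 := by rw [← hQ]; exact hQ0
    have := (Finset.sum_eq_zero_iff_of_nonneg
      (fun r (_ : r ∈ Finset.univ) => sq_nonneg (wbar r))).mp h0 r (Finset.mem_univ r)
    exact pow_eq_zero_iff (by norm_num) |>.mp this
  -- (2) q k = K²
  have hqK : ∀ k, q k = (K:ℝ)^2 := by
    intro k
    rw [hq]
    simp only
    have : ∀ r : Fin d, (wbar r - (K:ℝ) * W r k)^2 = (K:ℝ)^2 * (W r k)^2 := by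
      intro r; rw [hwbar0 r]; ring
    rw [Finset.sum_congr rfl (fun r _ => this r), ← Finset.mul_sum, hW k, mul_one]
  -- (3) t j = -K
  have ht_eq : ∀ j : Fin K × Fin n, t j = -(K:ℝ) := by
    intro j
    have hjlb : ∀ j' : Fin K × Fin n, -(K:ℝ) ≤ t j' := by
      intro j'
      have := htlb j'
      rw [hqK j'.1, Real.sqrt_sq (by positivity : (0:ℝ) ≤ (K:ℝ))] at this
      exact this
    have hzero : ∑ j' : Fin K × Fin n, (t j' + (K:ℝ)) = 0 := by
      rw [Finset.sum_add_distrib, Finset.sum_const, Finset.card_univ, Fintype.card_prod,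
        Fintype.card_fin, Fintype.card_fin, nsmul_eq_mul, hSeq]
      push_cast
      ring
    have := (Finset.sum_eq_zero_iff_of_nonneg
      (fun j' (_ : j' ∈ Finset.univ) => by linarith [hjlb j'] : ∀ j' ∈ Finset.univ, 0 ≤ t j' + (K:ℝ))).mp
      hzero j (Finset.mem_univ j)
    linarith
  -- (4) ∑ W H = 1 per column
  have hWH1 : ∀ j : Fin K × Fin n, ∑ r, W r j.1 * H r j = 1 := by
    intro j
    have hKne : ((K:ℝ)) ≠ 0 := by positivity
    have h1 : t j = -(K:ℝ) * ∑ r, W r j.1 * H r j := by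
      rw [ht]
      simp only
      rw [Finset.mul_sum]
      exact Finset.sum_congr rfl (fun r _ => by rw [hwbar0 r]; ring)
    have h2 : -(K:ℝ) * ∑ r, W r j.1 * H r j = -(K:ℝ) := by rw [← h1, ht_eq j]
    have h3 : (K:ℝ) * ((∑ r, W r j.1 * H r j) - 1) = 0 := by linear_combination -h2
    rcases mul_eq_zero.mp h3 with h | h
    · exact absurd h hKne
    · linarith
  -- (5) H = W pattern
  have hHW : ∀ (j : Fin K × Fin n) r, H r j = W r j.1 := by
    intro j
    have hz : ∑ r, (H r j - W r j.1)^2 = 0 := by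
      have e : ∀ r : Fin d, (H r j - W r j.1)^2
          = ((H r j)^2 - 2*(W r j.1 * H r j)) + (W r j.1)^2 := fun r => by ring
      rw [Finset.sum_congr rfl (fun r _ => e r), Finset.sum_add_distrib, Finset.sum_sub_distrib,
        hH j, hW j.1, ← Finset.mul_sum, hWH1 j]
      ring
    intro r
    have h1 := (Finset.sum_eq_zero_iff_of_nonneg
      (fun r (_ : r ∈ Finset.univ) => sq_nonneg (H r j - W r j.1))).mp hz r (Finset.mem_univ r)
    have h2 : H r j - W r j.1 = 0 := by
      exact pow_eq_zero_iff (two_ne_zero) |>.mp h1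
    linarith [h2]
  -- (6) softmax structure
  have hsm : ∀ (j : Fin K × Fin n) ℓ, softmax (logits τ W H j) ℓ
      = (if ℓ = j.1 then Real.exp τ else Real.exp (-τ/((K:ℝ)-1))) / Dq K τ := by
    intro j ℓ
    have hej : eps j = 0 := (Finset.sum_eq_zero_iff_of_nonneg
      (fun j' (_ : j' ∈ Finset.univ) => hepsnn j')).mp hepsum0 j (Finset.mem_univ j)
    simp only [heps] at hej
    have hLCE : LCE (logits τ W H j) j.1 = Real.log (Dq K τ) - τ
        + (bq K τ * ((∑ ℓ', logits τ W H j ℓ') - (K:ℝ) * logits τ W H j j.1)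
          + bq K τ * (K:ℝ) * τ) := by
      rw [hLst] at hej
      linarith [hej]
    exact lce_lower_eq τ hK (logits τ W H j) j.1 hLCE ℓ
  refine ⟨?_, hHW, hsm⟩
  intro r
  have := hwbar0 r
  simpa only [hwbar] using this

theorem critical_point_global_iff_alpha_beta (d K n : ℕ) (hK : 2 ≤ K) (hdK : K ≤ d) (hn : 1 ≤ n)
    (τ : ℝ) (hτ : 0 < τ)
    (W : Matrix (Fin d) (Fin K) ℝ) (H : Matrix (Fin d) (Fin K × Fin n) ℝ)
    (hW : W ∈ OB d (Fin K)) (hH : H ∈ OB d (Fin K × Fin n))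
    (hcrit : IsCriticalPoint τ W H) :
    (∀ (W' : Matrix (Fin d) (Fin K) ℝ) (H' : Matrix (Fin d) (Fin K × Fin n) ℝ),
        W' ∈ OB d (Fin K) → H' ∈ OB d (Fin K × Fin n) → ceRisk τ W H ≤ ceRisk τ W' H')
      ↔ ((∀ k : Fin K, alphaCoef τ W H k ≤ -(Real.sqrt n * specNorm (Gmat τ W H))) ∧
         (∀ j : Fin K × Fin n, betaCoef τ W H j ≤ -(specNorm (Gmat τ W H) / Real.sqrt n))) := by
  constructor
  · intro hglob
    have hKr : (2:ℝ) ≤ (K:ℝ) := by exact_mod_cast hK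
    have hnr : (1:ℝ) ≤ (n:ℝ) := by exact_mod_cast hn
    have hNpos : (0:ℝ) < (K:ℝ)*(n:ℝ) := by nlinarith
    have hb : 0 < bq K τ := bq_pos τ hK
    have hsqn : (0:ℝ) < Real.sqrt n := Real.sqrt_pos.mpr (by linarith)
    have hsq2 : Real.sqrt n * Real.sqrt n = (n:ℝ) := Real.mul_self_sqrt (by linarith)
    -- the reference point is feasible and attains the bound
    have hHstarOB : (fun r (j : Fin K × Fin n) => Wstar d K r j.1) ∈ OB d (Fin K × Fin n) :=
      fun j => Wstar_OB hK hdK j.1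
    have hfstar : ceRisk τ W H ≤ Real.log (Dq K τ) - τ := by
      rw [← ceRisk_Wstar hK hdK hn (τ := τ)]
      exact hglob _ _ (Wstar_OB hK hdK) hHstarOB
    obtain ⟨hw0, hHW, hsm⟩ := global_structure hK hn hτ W H hW hH hfstar
    set c : ℝ := bq K τ / ((K:ℝ)*n) with hc
    have hcnn : 0 ≤ c := le_of_lt (div_pos hb hNpos)
    have Gform : ∀ ℓ (j : Fin K × Fin n), Gmat τ W H ℓ j
        = c * (1 - (K:ℝ) * (if ℓ = j.1 then 1 else 0)) := by
      intro ℓ j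
      unfold Gmat
      rw [hsm j ℓ]
      have := pdiff τ hK j.1 ℓ
      rw [softmax_zstar τ hK j.1 ℓ] at this
      rw [this, hc]
      ring
    have hspec : specNorm (Gmat τ W H) = c * ((K:ℝ) * Real.sqrt n) :=
      specNorm_struct hK hn hcnn _ Gform
    have hsne : Real.sqrt n ≠ 0 := ne_of_gt hsqn
    have hspec1 : Real.sqrt n * specNorm (Gmat τ W H) = bq K τ := by
      rw [hspec, hc]
      field_simp
      linear_combination hsq2
    have hspec2 : specNorm (Gmat τ W H) / Real.sqrt n = bq K τ / n := by
      rw [hspec, mul_div_assoc, mul_div_assoc, div_self hsne, mul_one, hc]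
      field_simp
    constructor
    · intro k
      have halpha : alphaCoef τ W H k = -(bq K τ) := by
        unfold alphaCoef
        have inner : ∀ r, ∑ j : Fin K × Fin n, H r j * Gmat τ W H k j
            = -(bq K τ) * W r k := by
          intro r
          have e1 : ∀ j : Fin K × Fin n, H r j * Gmat τ W H k j
              = c * W r j.1 - c * (K:ℝ) * (if k = j.1 then W r j.1 else 0) := by
            intro j
            rw [hHW j r, Gform k j]
            by_cases h : k = j.1 <;> simp [h] <;> ring
          rw [Finset.sum_congr rfl (fun j _ => e1 j), Finset.sum_sub_distrib,
            ← Finset.mul_sum, ← Finset.mul_sum]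
          have e2 : ∑ j : Fin K × Fin n, W r j.1 = 0 := by
            rw [Fintype.sum_prod_type]
            have h1 : ∀ k' : Fin K, ∑ _i : Fin n, W r k' = (n:ℝ) * W r k' := by
              intro k'
              rw [Finset.sum_const, Finset.card_univ, Fintype.card_fin, nsmul_eq_mul]
            rw [Finset.sum_congr rfl (fun k' _ => h1 k'), ← Finset.mul_sum, hw0 r, mul_zero]
          have e3 : ∑ j : Fin K × Fin n, (if k = j.1 then W r j.1 else 0) = (n:ℝ) * W r k := by
            rw [Fintype.sum_prod_type]
            have h1 : ∀ k' : Fin K, ∑ _i : Fin n, (if k = k' then W r k' else 0)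
                = (n:ℝ) * (if k = k' then W r k' else 0) := by
              intro k'
              rw [Finset.sum_const, Finset.card_univ, Fintype.card_fin, nsmul_eq_mul]
            rw [Finset.sum_congr rfl (fun k' _ => h1 k'), ← Finset.mul_sum,
              Finset.sum_ite_eq]
            simp
          rw [e2, e3, hc]
          field_simp
          ring
        rw [Finset.sum_congr rfl (fun r (_ : r ∈ Finset.univ) => by rw [inner r])]
        have : ∀ r : Fin d, W r k * (-(bq K τ) * W r k) = -(bq K τ) * (W r k)^2 :=
          fun r => by ring
        rw [Finset.sum_congr rfl (fun r _ => this r), ← Finset.mul_sum, hW k, mul_one]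
      rw [halpha, hspec1]
    · intro j
      have hbeta : betaCoef τ W H j = -(bq K τ) / n := by
        unfold betaCoef
        have inner2 : ∀ r, ∑ ℓ, W r ℓ * Gmat τ W H ℓ j
            = -(c * (K:ℝ)) * W r j.1 := by
          intro r
          have e1 : ∀ ℓ : Fin K, W r ℓ * Gmat τ W H ℓ j
              = c * W r ℓ - c * (K:ℝ) * (if ℓ = j.1 then W r ℓ else 0) := by
            intro ℓ
            rw [Gform ℓ j]
            by_cases h : ℓ = j.1 <;> simp [h] <;> ring
          rw [Finset.sum_congr rfl (fun ℓ _ => e1 ℓ), Finset.sum_sub_distrib,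
            ← Finset.mul_sum, ← Finset.mul_sum, hw0 r, Finset.sum_ite_eq']
          simp
        have h2 : ∀ r, H r j * ∑ ℓ, W r ℓ * Gmat τ W H ℓ j
            = -(c * (K:ℝ)) * (W r j.1)^2 := by
          intro r
          rw [inner2 r, hHW j r]
          ring
        rw [Finset.sum_congr rfl (fun r (_ : r ∈ Finset.univ) => h2 r), ← Finset.mul_sum,
          hW j.1, mul_one, hc]
        field_simp
      rw [hbeta, hspec2]
      rw [neg_div]
  · rintro ⟨hα, hβ⟩ W' H' hW' hH'
    have h1 := ceRisk_tangent hK hτ W W' H H'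
    have h2 := ipG_lower τ W H W' H' hW' hH'
    have h3 : ipG τ W H W H ≤ -((K:ℝ) * Real.sqrt n * specNorm (Gmat τ W H)) := by
      rw [← sum_alpha_eq]
      calc ∑ k, alphaCoef τ W H k ≤ ∑ _k : Fin K, -(Real.sqrt n * specNorm (Gmat τ W H)) :=
            Finset.sum_le_sum (fun k _ => hα k)
        _ = -((K:ℝ) * Real.sqrt n * specNorm (Gmat τ W H)) := by
            rw [Finset.sum_const, Finset.card_univ, Fintype.card_fin, nsmul_eq_mul]
            ring
    have h4 : 0 ≤ ipG τ W H W' H' - ipG τ W H W H := by linarith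
    have h5 : 0 ≤ τ * (ipG τ W H W' H' - ipG τ W H W H) := mul_nonneg hτ.le h4
    linarith
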